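/- arXiv:1602.03698 — 2 statements merged into one kernel-verified Lean document; each statement's English description precedes it below -/
import Mathlib

section
/- Let n, k, m be integers with 1 ≤ k ≤ n/2 and n−k ≤ m ≤ n−2, and let G be a connected simple graph on n vertices with minimum degree at least k and maximum degree at most m. Then R'(G) ≥ n/2 − (1/2)·(1/k − 1/m)·k·(n−k). -/
open scoped Classical

private lemma tele_aux' (a : ℕ) : ∀ b : ℕ, a ≤ b →
    ∑ t ∈ Finset.Ico a b, ((t:ℝ)⁻¹ - ((t:ℝ)+1)⁻¹) = (a:ℝ)⁻¹ - (b:ℝ)⁻¹ := by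
  intro b
  induction b with
  | zero => intro h; interval_cases a; simp
  | succ b ih =>
    intro h
    rcases Nat.lt_or_ge a (b+1) with h' | h'
    · have hab : a ≤ b := Nat.lt_succ_iff.mp h'
      rw [Finset.sum_Ico_succ_top hab, ih hab]
      push_cast
      ring
    · have : a = b + 1 := le_antisymm h h'
      subst this
      simp

private lemma tele_dart' (k m da db : ℕ) (hka : k ≤ da) (hbm : db ≤ m)
    (hda : 0 < da) (hdb : 0 < db) :
    max ((da:ℝ)⁻¹ - (db:ℝ)⁻¹) 0
      = ∑ t ∈ Finset.Ico k m, (if da ≤ t ∧ t < db then ((t:ℝ)⁻¹ - ((t:ℝ)+1)⁻¹) else 0) := by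
  rw [← Finset.sum_filter]
  have hfil : (Finset.Ico k m).filter (fun t => da ≤ t ∧ t < db) = Finset.Ico da db := by
    ext t
    simp only [Finset.mem_filter, Finset.mem_Ico]
    omega
  rw [hfil]
  have hA : (0:ℝ) < da := by exact_mod_cast hda
  have hB : (0:ℝ) < db := by exact_mod_cast hdb
  rcases le_or_gt db da with h | h
  · rw [Finset.Ico_eq_empty (by omega), Finset.sum_empty]
    have h' : (da:ℝ)⁻¹ ≤ (db:ℝ)⁻¹ := by
      apply inv_anti₀ hB
      exact_mod_cast h
    rw [max_eq_right (by linarith)]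
  · rw [tele_aux' da db (le_of_lt h)]
    have h' : (db:ℝ)⁻¹ ≤ (da:ℝ)⁻¹ := by
      apply inv_anti₀ hA
      exact_mod_cast (le_of_lt h)
    rw [max_eq_left (by linarith)]

private lemma inv_max_eq' (a b : ℕ) (ha : 0 < a) (hb : 0 < b) :
    (1:ℝ)/((max a b : ℕ):ℝ) = (a:ℝ)⁻¹ - max ((a:ℝ)⁻¹ - (b:ℝ)⁻¹) 0 := by
  have hA : (0:ℝ) < a := by exact_mod_cast ha
  have hB : (0:ℝ) < b := by exact_mod_cast hb
  rcases le_total a b with h | h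
  · rw [max_eq_right h]
    have h' : (b:ℝ)⁻¹ ≤ (a:ℝ)⁻¹ := by
      apply inv_anti₀ hA
      exact_mod_cast h
    rw [max_eq_left (by linarith), one_div]
    ring
  · rw [max_eq_left h]
    have h' : (a:ℝ)⁻¹ ≤ (b:ℝ)⁻¹ := by
      apply inv_anti₀ hB
      exact_mod_cast h
    rw [max_eq_right (by linarith), one_div]
    ring

private lemma dart_sum_two' {V : Type*} [Fintype V] (G : SimpleGraph V)
    (F : V → V → ℝ) (hF : ∀ u v, F u v = F v u) :
    ∑ d : G.Dart, F d.toProd.1 d.toProd.2 = 2 * ∑ e ∈ G.edgeFinset, Sym2.lift ⟨F, hF⟩ e := by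
  classical
  rw [← Finset.sum_fiberwise_of_maps_to (g := SimpleGraph.Dart.edge)
      (t := G.edgeFinset) (fun d _ => by simp [SimpleGraph.Dart.edge_mem]),
    Finset.mul_sum]
  refine Finset.sum_congr rfl ?_
  intro e he
  rw [SimpleGraph.mem_edgeFinset] at he
  induction e with
  | _ u v =>
    have hadj : G.Adj u v := he
    let d₀ : G.Dart := ⟨(u, v), hadj⟩
    have hfib : (Finset.univ.filter fun d : G.Dart => d.edge = s(u,v)) = {d₀, d₀.symm} := by
      have := d₀.edge_fiber
      convert this using 2
      rfl
    rw [hfib, Finset.sum_insert (by simp [d₀.symm_ne.symm]), Finset.sum_singleton]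
    have h1 : d₀.toProd = (u, v) := rfl
    have h2 : d₀.symm.toProd = (v, u) := rfl
    rw [h1, h2]
    simp only [Sym2.lift_mk]
    rw [hF v u]
    ring

private lemma dart_fst_sum' {V : Type*} [Fintype V] (G : SimpleGraph V)
    (hdeg : ∀ v : V, 0 < G.degree v) :
    ∑ d : G.Dart, ((G.degree d.toProd.1 : ℝ))⁻¹ = (Fintype.card V : ℝ) := by
  classical
  rw [← Finset.sum_fiberwise_of_maps_to (g := fun d : G.Dart => d.toProd.1)
      (t := Finset.univ) (fun d _ => Finset.mem_univ _)]
  have key : ∀ v : V, ∑ d ∈ Finset.univ.filter (fun d : G.Dart => d.toProd.1 = v),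
      ((G.degree d.toProd.1 : ℝ))⁻¹ = 1 := by
    intro v
    have hcard : (Finset.univ.filter fun d : G.Dart => d.toProd.1 = v).card = G.degree v := by
      have := G.dart_fst_fiber_card_eq_degree v
      convert this using 2
    rw [Finset.sum_congr rfl (g := fun _ => ((G.degree v : ℝ))⁻¹)
      (fun d hd => by rw [(Finset.mem_filter.mp hd).2])]
    rw [Finset.sum_const, hcard, nsmul_eq_mul]
    have hne : ((G.degree v : ℝ)) ≠ 0 := Nat.cast_ne_zero.mpr (hdeg v).ne'
    field_simp
  rw [Finset.sum_congr rfl (fun v _ => key v), Finset.sum_const, Finset.card_univ,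
    nsmul_eq_mul, mul_one]

private lemma cut_le_product' {V : Type*} [Fintype V] (G : SimpleGraph V) (t : ℕ) :
    (Finset.univ.filter fun d : G.Dart =>
        G.degree d.toProd.1 ≤ t ∧ t < G.degree d.toProd.2).card ≤
      (Finset.univ.filter fun v : V => G.degree v ≤ t).card *
      (Finset.univ.filter fun v : V => t < G.degree v).card := by
  classical
  rw [← Finset.card_product]
  apply Finset.card_le_card_of_injOn (fun d => d.toProd)
  · intro d hd
    rw [Finset.mem_coe, Finset.mem_filter] at hd
    rw [Finset.mem_coe, Finset.mem_product]
    exact ⟨Finset.mem_filter.mpr ⟨Finset.mem_univ _, hd.2.1⟩,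
      Finset.mem_filter.mpr ⟨Finset.mem_univ _, hd.2.2⟩⟩
  · intro d₁ _ d₂ _ h
    exact SimpleGraph.Dart.ext _ _ h

private lemma cut_le_degsum' {V : Type*} [Fintype V] (G : SimpleGraph V) (t : ℕ) :
    (Finset.univ.filter fun d : G.Dart =>
        G.degree d.toProd.1 ≤ t ∧ t < G.degree d.toProd.2).card ≤
      ∑ v ∈ Finset.univ.filter (fun v : V => G.degree v ≤ t), G.degree v := by
  classical
  have hs : ∑ v ∈ Finset.univ.filter (fun v : V => G.degree v ≤ t), G.degree v
      = ((Finset.univ.filter (fun v : V => G.degree v ≤ t)).sigma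
          (fun v => G.neighborFinset v)).card := by
    rw [Finset.card_sigma]
    exact Finset.sum_congr rfl fun v _ => (G.card_neighborFinset_eq_degree v).symm
  rw [hs]
  apply Finset.card_le_card_of_injOn (fun d => ⟨d.toProd.1, d.toProd.2⟩)
  · intro d hd
    rw [Finset.mem_coe, Finset.mem_filter] at hd
    rw [Finset.mem_coe, Finset.mem_sigma]
    refine ⟨Finset.mem_filter.mpr ⟨Finset.mem_univ _, hd.2.1⟩, ?_⟩
    rw [SimpleGraph.mem_neighborFinset]
    exact d.adj
  · intro d₁ _ d₂ _ h
    apply SimpleGraph.Dart.ext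
    have h1 := congrArg Sigma.fst h
    have h2 := congrArg Sigma.snd h
    simp only at h1 h2
    exact Prod.ext h1 h2

private lemma compl_card' {V : Type*} [Fintype V] (G : SimpleGraph V) (t : ℕ) :
    (Finset.univ.filter fun v : V => t < G.degree v).card
      = Fintype.card V - (Finset.univ.filter fun v : V => G.degree v ≤ t).card := by
  classical
  have : (Finset.univ.filter fun v : V => t < G.degree v)
      = (Finset.univ.filter fun v : V => G.degree v ≤ t)ᶜ := by
    ext v
    simp [Finset.mem_compl, not_le]
  rw [this, Finset.card_compl]

/-- The variation of the Randić index: `R'(G) = ∑_{uv ∈ E(G)} 1 / max(d(u), d(v))`. -/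
noncomputable def Rvar {V : Type*} [Fintype V] (G : SimpleGraph V) : ℝ :=
  ∑ e ∈ G.edgeFinset,
    Sym2.lift ⟨fun u v => (1 : ℝ) / (max (G.degree u) (G.degree v) : ℕ),
      fun u v => by dsimp only; rw [max_comm]⟩ e

set_option maxHeartbeats 2000000 in
theorem stmt_14 {n k m : ℕ} (hk : 1 ≤ k) (hkn : 2 * k ≤ n)
    (hnm : n - k ≤ m) (hmn : m + 2 ≤ n)
    {V : Type*} [Fintype V] (G : SimpleGraph V)
    (hcard : Fintype.card V = n) (hconn : G.Connected)
    (hmin : ∀ v : V, k ≤ G.degree v) (hmax : ∀ v : V, G.degree v ≤ m) :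
    (n : ℝ) / 2 - (1 / 2) * (1 / k - 1 / m) * k * (n - k) ≤ Rvar G := by
  classical
  have hdegpos : ∀ v : V, 0 < G.degree v := fun v => lt_of_lt_of_le hk (hmin v)
  have hkm : k ≤ m := by omega
  have hknn : k ≤ n := by omega
  have hm1 : 1 ≤ m := le_trans hk hkm
  have hK0 : (0:ℝ) < k := by exact_mod_cast hk
  have hM0 : (0:ℝ) < m := by exact_mod_cast hm1
  have hNK : ((n - k : ℕ) : ℝ) = (n:ℝ) - (k:ℝ) := Nat.cast_sub hknn
  -- Step 1: 2 * Rvar G = n - S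
  have step1 : 2 * Rvar G = (n : ℝ)
      - ∑ d : G.Dart, max ((G.degree d.toProd.1 : ℝ)⁻¹ - (G.degree d.toProd.2 : ℝ)⁻¹) 0 := by
    have h0 : 2 * Rvar G = ∑ d : G.Dart,
        (1 : ℝ) / (max (G.degree d.toProd.1) (G.degree d.toProd.2) : ℕ) := by
      unfold Rvar
      exact (dart_sum_two' G _ _).symm
    rw [h0]
    have h1 : ∀ d : G.Dart, (1 : ℝ) / (max (G.degree d.toProd.1) (G.degree d.toProd.2) : ℕ)
        = (G.degree d.toProd.1 : ℝ)⁻¹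
          - max ((G.degree d.toProd.1 : ℝ)⁻¹ - (G.degree d.toProd.2 : ℝ)⁻¹) 0 :=
      fun d => inv_max_eq' _ _ (hdegpos _) (hdegpos _)
    rw [Finset.sum_congr rfl (fun d _ => h1 d), Finset.sum_sub_distrib,
      dart_fst_sum' G hdegpos, hcard]
  -- Step 2: rewrite S as a sum over thresholds
  have step2 : ∑ d : G.Dart, max ((G.degree d.toProd.1 : ℝ)⁻¹ - (G.degree d.toProd.2 : ℝ)⁻¹) 0
      = ∑ t ∈ Finset.Ico k m, ((t:ℝ)⁻¹ - ((t:ℝ)+1)⁻¹) *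
          ((Finset.univ.filter fun d : G.Dart =>
            G.degree d.toProd.1 ≤ t ∧ t < G.degree d.toProd.2).card : ℝ) := by
    have h1 : ∀ d : G.Dart,
        max ((G.degree d.toProd.1 : ℝ)⁻¹ - (G.degree d.toProd.2 : ℝ)⁻¹) 0
        = ∑ t ∈ Finset.Ico k m,
            (if G.degree d.toProd.1 ≤ t ∧ t < G.degree d.toProd.2 then
              ((t:ℝ)⁻¹ - ((t:ℝ)+1)⁻¹) else 0) :=
      fun d => tele_dart' k m _ _ (hmin _) (hmax _) (hdegpos _) (hdegpos _)
    rw [Finset.sum_congr rfl (fun d _ => h1 d), Finset.sum_comm]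
    refine Finset.sum_congr rfl fun t _ => ?_
    rw [← Finset.sum_filter, Finset.sum_const, nsmul_eq_mul, mul_comm]
  -- θ
  have hAm : Finset.univ.filter (fun v : V => G.degree v ≤ m) = Finset.univ := by
    apply Finset.filter_true_of_mem
    intro v _; exact hmax v
  have hexists : ∃ t, k ≤ t ∧ n - k ≤ (Finset.univ.filter fun v : V => G.degree v ≤ t).card := by
    refine ⟨m, hkm, ?_⟩
    rw [hAm, Finset.card_univ, hcard]
    omega
  obtain ⟨θ, ⟨hθk, hθa⟩, hθmin⟩ : ∃ θ, (k ≤ θ ∧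
      n - k ≤ (Finset.univ.filter fun v : V => G.degree v ≤ θ).card) ∧
      ∀ t < θ, ¬(k ≤ t ∧ n - k ≤ (Finset.univ.filter fun v : V => G.degree v ≤ t).card) :=
    ⟨Nat.find hexists, Nat.find_spec hexists, fun t ht => Nat.find_min hexists ht⟩
  have hθm : θ ≤ m := by
    by_contra hcon
    push_neg at hcon
    refine hθmin m hcon ⟨hkm, ?_⟩
    rw [hAm, Finset.card_univ, hcard]
    omega
  have hΘ0 : (0:ℝ) < θ := by
    have : 0 < θ := lt_of_lt_of_le hk hθk
    exact_mod_cast this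
  have hcnonneg : ∀ t : ℕ, 1 ≤ t → (0:ℝ) ≤ (t:ℝ)⁻¹ - ((t:ℝ)+1)⁻¹ := by
    intro t ht
    have h1 : (0:ℝ) < t := by exact_mod_cast ht
    have : ((t:ℝ)+1)⁻¹ ≤ (t:ℝ)⁻¹ := by
      apply inv_anti₀ h1; linarith
    linarith
  -- Part 2
  have part2 : ∑ t ∈ Finset.Ico θ m, ((t:ℝ)⁻¹ - ((t:ℝ)+1)⁻¹) *
          ((Finset.univ.filter fun d : G.Dart =>
            G.degree d.toProd.1 ≤ t ∧ t < G.degree d.toProd.2).card : ℝ)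
      ≤ ((k:ℝ) * ((n:ℝ) - k)) * ((θ:ℝ)⁻¹ - (m:ℝ)⁻¹) := by
    have hbound : ∀ t ∈ Finset.Ico θ m, ((t:ℝ)⁻¹ - ((t:ℝ)+1)⁻¹) *
          ((Finset.univ.filter fun d : G.Dart =>
            G.degree d.toProd.1 ≤ t ∧ t < G.degree d.toProd.2).card : ℝ)
        ≤ ((t:ℝ)⁻¹ - ((t:ℝ)+1)⁻¹) * ((k:ℝ) * ((n:ℝ) - k)) := by
      intro t ht
      rw [Finset.mem_Ico] at ht
      have hct := hcnonneg t (le_trans hk (le_trans hθk ht.1))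
      apply mul_le_mul_of_nonneg_left _ hct
      set a : ℕ := (Finset.univ.filter fun v : V => G.degree v ≤ t).card with hadef
      have hsub : (Finset.univ.filter fun v : V => G.degree v ≤ θ)
          ⊆ (Finset.univ.filter fun v : V => G.degree v ≤ t) := by
        intro v hv
        rw [Finset.mem_filter] at hv ⊢
        exact ⟨hv.1, le_trans hv.2 ht.1⟩
      have hat : n - k ≤ a := le_trans hθa (Finset.card_le_card hsub)
      have han : a ≤ n := by
        rw [← hcard]; exact Finset.card_le_univ _
      have h2 : (Finset.univ.filter fun d : G.Dart =>
            G.degree d.toProd.1 ≤ t ∧ t < G.degree d.toProd.2).card ≤ a * (n - a) := by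
        have := cut_le_product' G t
        rwa [compl_card' G t, hcard] at this
      have hx1 : ((n:ℝ) - k) ≤ (a : ℝ) := by
        rw [← hNK]; exact_mod_cast hat
      have hx2 : (a : ℝ) ≤ (n:ℝ) := by exact_mod_cast han
      have hkn' : (k:ℝ) ≤ (n:ℝ) - k := by
        have h4 : ((2*k : ℕ):ℝ) ≤ (n:ℝ) := by exact_mod_cast hkn
        push_cast at h4; linarith
      have h5 : ((Finset.univ.filter fun d : G.Dart =>
            G.degree d.toProd.1 ≤ t ∧ t < G.degree d.toProd.2).card : ℝ)
          ≤ (a:ℝ) * ((n:ℝ) - a) := by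
        have h6 : ((a * (n - a) : ℕ) : ℝ) = (a:ℝ) * ((n:ℝ) - a) := by
          push_cast [Nat.cast_sub han]; ring
        rw [← h6]; exact_mod_cast h2
      nlinarith [h5, hx1, hx2, hkn']
    calc ∑ t ∈ Finset.Ico θ m, ((t:ℝ)⁻¹ - ((t:ℝ)+1)⁻¹) *
          ((Finset.univ.filter fun d : G.Dart =>
            G.degree d.toProd.1 ≤ t ∧ t < G.degree d.toProd.2).card : ℝ)
        ≤ ∑ t ∈ Finset.Ico θ m, ((t:ℝ)⁻¹ - ((t:ℝ)+1)⁻¹) * ((k:ℝ) * ((n:ℝ) - k)) :=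
          Finset.sum_le_sum hbound
      _ = ((k:ℝ) * ((n:ℝ) - k)) * ∑ t ∈ Finset.Ico θ m, ((t:ℝ)⁻¹ - ((t:ℝ)+1)⁻¹) := by
          rw [← Finset.sum_mul]; ring
      _ = ((k:ℝ) * ((n:ℝ) - k)) * ((θ:ℝ)⁻¹ - (m:ℝ)⁻¹) := by
          rw [tele_aux' θ m hθm]
  -- Part 1
  have part1 : ∑ t ∈ Finset.Ico k θ, ((t:ℝ)⁻¹ - ((t:ℝ)+1)⁻¹) *
          ((Finset.univ.filter fun d : G.Dart =>
            G.degree d.toProd.1 ≤ t ∧ t < G.degree d.toProd.2).card : ℝ)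
      ≤ ((n:ℝ) - k) * (1 - (k:ℝ)/θ) := by
    have hstep : ∀ t ∈ Finset.Ico k θ, ((t:ℝ)⁻¹ - ((t:ℝ)+1)⁻¹) *
          ((Finset.univ.filter fun d : G.Dart =>
            G.degree d.toProd.1 ≤ t ∧ t < G.degree d.toProd.2).card : ℝ)
        ≤ ∑ v : V, (if G.degree v ≤ t then ((t:ℝ)⁻¹ - ((t:ℝ)+1)⁻¹) * (G.degree v : ℝ) else 0) := by
      intro t ht
      rw [Finset.mem_Ico] at ht
      have hct := hcnonneg t (le_trans hk ht.1)
      have h1 : ((Finset.univ.filter fun d : G.Dart =>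
            G.degree d.toProd.1 ≤ t ∧ t < G.degree d.toProd.2).card : ℝ)
          ≤ ∑ v : V, (if G.degree v ≤ t then (G.degree v : ℝ) else 0) := by
        have h2 := cut_le_degsum' G t
        have h3 : ((∑ v ∈ Finset.univ.filter (fun v : V => G.degree v ≤ t), G.degree v : ℕ) : ℝ)
            = ∑ v : V, (if G.degree v ≤ t then (G.degree v : ℝ) else 0) := by
          rw [Nat.cast_sum, Finset.sum_filter]
        rw [← h3]
        exact_mod_cast h2
      calc ((t:ℝ)⁻¹ - ((t:ℝ)+1)⁻¹) *
          ((Finset.univ.filter fun d : G.Dart =>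
            G.degree d.toProd.1 ≤ t ∧ t < G.degree d.toProd.2).card : ℝ)
          ≤ ((t:ℝ)⁻¹ - ((t:ℝ)+1)⁻¹) *
            ∑ v : V, (if G.degree v ≤ t then (G.degree v : ℝ) else 0) :=
            mul_le_mul_of_nonneg_left h1 hct
        _ = ∑ v : V, (if G.degree v ≤ t then ((t:ℝ)⁻¹ - ((t:ℝ)+1)⁻¹) * (G.degree v : ℝ) else 0) := by
            rw [Finset.mul_sum]
            exact Finset.sum_congr rfl (fun v _ => by split <;> ring)
    have hswap : ∑ t ∈ Finset.Ico k θ, ∑ v : V,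
        (if G.degree v ≤ t then ((t:ℝ)⁻¹ - ((t:ℝ)+1)⁻¹) * (G.degree v : ℝ) else 0)
        = ∑ v : V, ∑ t ∈ Finset.Ico k θ,
          (if G.degree v ≤ t then ((t:ℝ)⁻¹ - ((t:ℝ)+1)⁻¹) * (G.degree v : ℝ) else 0) :=
      Finset.sum_comm
    have hperv : ∀ v : V, ∑ t ∈ Finset.Ico k θ,
        (if G.degree v ≤ t then ((t:ℝ)⁻¹ - ((t:ℝ)+1)⁻¹) * (G.degree v : ℝ) else 0)
        ≤ (if G.degree v < θ then (1 - (k:ℝ)/θ) else 0) := by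
      intro v
      rw [← Finset.sum_filter]
      have hfil : (Finset.Ico k θ).filter (fun t => G.degree v ≤ t)
          = Finset.Ico (G.degree v) θ := by
        ext t
        simp only [Finset.mem_filter, Finset.mem_Ico]
        have := hmin v
        omega
      rw [hfil]
      rcases lt_or_ge (G.degree v) θ with h | h
      · rw [if_pos h, ← Finset.sum_mul, tele_aux' _ _ (le_of_lt h)]
        have hdv : (0:ℝ) < (G.degree v : ℝ) := by exact_mod_cast hdegpos v
        have hkd : (k:ℝ) ≤ (G.degree v : ℝ) := by exact_mod_cast hmin v
        rw [sub_mul, inv_mul_cancel₀ hdv.ne']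
        have h7 : (θ:ℝ)⁻¹ * (k:ℝ) ≤ (θ:ℝ)⁻¹ * (G.degree v : ℝ) :=
          mul_le_mul_of_nonneg_left hkd (by positivity)
        have hdiv : (k:ℝ)/θ = (θ:ℝ)⁻¹ * k := by ring
        rw [hdiv]
        linarith
      · rw [if_neg (not_lt.mpr h), Finset.Ico_eq_empty (not_lt.mpr h), Finset.sum_empty]
    have hcount : ∑ v : V, (if G.degree v < θ then (1 - (k:ℝ)/θ) else 0)
        ≤ ((n:ℝ) - k) * (1 - (k:ℝ)/θ) := by
      have hfactor : (0:ℝ) ≤ 1 - (k:ℝ)/θ := by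
        have : (k:ℝ) ≤ θ := by exact_mod_cast hθk
        rw [sub_nonneg, div_le_one hΘ0]
        exact this
      have hsum : ∑ v : V, (if G.degree v < θ then (1 - (k:ℝ)/θ) else 0)
          = ((Finset.univ.filter fun v : V => G.degree v < θ).card : ℝ) * (1 - (k:ℝ)/θ) := by
        rw [← Finset.sum_filter, Finset.sum_const, nsmul_eq_mul]
      rw [hsum]
      apply mul_le_mul_of_nonneg_right _ hfactor
      have hcard2 : (Finset.univ.filter fun v : V => G.degree v < θ).card ≤ n - k := by
        rcases eq_or_lt_of_le hθk with heq | hlt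
        · have hempty : (Finset.univ.filter fun v : V => G.degree v < θ) = ∅ := by
            apply Finset.filter_false_of_mem
            intro v _
            rw [← heq]
            exact not_lt.mpr (hmin v)
          rw [hempty]
          simp
        · have hmin' := hθmin (θ - 1) (by omega)
          have h5 : (Finset.univ.filter fun v : V => G.degree v ≤ θ - 1).card < n - k := by
            by_contra hcon
            push_neg at hcon
            exact hmin' ⟨by omega, hcon⟩
          have hset : (Finset.univ.filter fun v : V => G.degree v < θ)
              = (Finset.univ.filter fun v : V => G.degree v ≤ θ - 1) := by
            ext v
            simp only [Finset.mem_filter, Finset.mem_univ, true_and]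
            omega
          rw [hset]
          omega
      calc ((Finset.univ.filter fun v : V => G.degree v < θ).card : ℝ)
          ≤ ((n - k : ℕ) : ℝ) := by exact_mod_cast hcard2
        _ = (n:ℝ) - k := hNK
    calc ∑ t ∈ Finset.Ico k θ, ((t:ℝ)⁻¹ - ((t:ℝ)+1)⁻¹) *
          ((Finset.univ.filter fun d : G.Dart =>
            G.degree d.toProd.1 ≤ t ∧ t < G.degree d.toProd.2).card : ℝ)
        ≤ ∑ t ∈ Finset.Ico k θ, ∑ v : V,
            (if G.degree v ≤ t then ((t:ℝ)⁻¹ - ((t:ℝ)+1)⁻¹) * (G.degree v : ℝ) else 0) :=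
          Finset.sum_le_sum hstep
      _ = ∑ v : V, ∑ t ∈ Finset.Ico k θ,
            (if G.degree v ≤ t then ((t:ℝ)⁻¹ - ((t:ℝ)+1)⁻¹) * (G.degree v : ℝ) else 0) := hswap
      _ ≤ ∑ v : V, (if G.degree v < θ then (1 - (k:ℝ)/θ) else 0) :=
            Finset.sum_le_sum (fun v _ => hperv v)
      _ ≤ ((n:ℝ) - k) * (1 - (k:ℝ)/θ) := hcount
  -- combine
  have hsplit : ∑ t ∈ Finset.Ico k m, ((t:ℝ)⁻¹ - ((t:ℝ)+1)⁻¹) *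
          ((Finset.univ.filter fun d : G.Dart =>
            G.degree d.toProd.1 ≤ t ∧ t < G.degree d.toProd.2).card : ℝ)
      = (∑ t ∈ Finset.Ico k θ, ((t:ℝ)⁻¹ - ((t:ℝ)+1)⁻¹) *
          ((Finset.univ.filter fun d : G.Dart =>
            G.degree d.toProd.1 ≤ t ∧ t < G.degree d.toProd.2).card : ℝ))
        + ∑ t ∈ Finset.Ico θ m, ((t:ℝ)⁻¹ - ((t:ℝ)+1)⁻¹) *
          ((Finset.univ.filter fun d : G.Dart =>
            G.degree d.toProd.1 ≤ t ∧ t < G.degree d.toProd.2).card : ℝ) :=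
    (Finset.sum_Ico_consecutive _ hθk hθm).symm
  have hSle : ∑ d : G.Dart,
      max ((G.degree d.toProd.1 : ℝ)⁻¹ - (G.degree d.toProd.2 : ℝ)⁻¹) 0
      ≤ ((n:ℝ) - k) * (1 - (k:ℝ)/m) := by
    rw [step2, hsplit]
    have hcomb := add_le_add part1 part2
    have heq : ((n:ℝ) - k) * (1 - (k:ℝ)/θ)
        + ((k:ℝ) * ((n:ℝ) - k)) * ((θ:ℝ)⁻¹ - (m:ℝ)⁻¹)
        = ((n:ℝ) - k) * (1 - (k:ℝ)/m) := by
      field_simp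
      ring
    linarith
  -- finish
  have hfinal : (1 / (k:ℝ) - 1 / m) * k * ((n:ℝ) - k) = ((n:ℝ) - k) * (1 - (k:ℝ)/m) := by
    field_simp
  have h2R : (n:ℝ) - ((n:ℝ) - k) * (1 - (k:ℝ)/m) ≤ 2 * Rvar G := by
    rw [step1]
    linarith
  nlinarith [h2R, hfinal]
end

section
/- Let n, k, m be integers with n/2 ≤ k ≤ m ≤ n−2, and let G be a connected simple graph on n vertices with minimum degree at least k and maximum degree at most m. Then R'(G) ≥ n/2 − (n²/8)·(1/k − 1/m). -/
open scoped Classical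

open Finset

section Aux

variable {V : Type*} [Fintype V] (G : SimpleGraph V)

lemma image_dart_edge :
    (Finset.univ.image (SimpleGraph.Dart.edge : G.Dart → Sym2 V)) = G.edgeFinset := by
  ext e
  simp only [Finset.mem_image, Finset.mem_univ, true_and, SimpleGraph.mem_edgeFinset]
  constructor
  · rintro ⟨d, rfl⟩; exact d.edge_mem
  · intro he
    induction e with
    | _ u v => exact ⟨⟨(u, v), he⟩, rfl⟩

lemma dart_sum (g : V → V → ℝ) (hg : ∀ u v, g u v = g v u) :
    ∑ d : G.Dart, g d.fst d.snd = 2 * ∑ e ∈ G.edgeFinset, Sym2.lift ⟨g, hg⟩ e := by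
  classical
  have h1 : ∀ d : G.Dart, g d.fst d.snd = Sym2.lift ⟨g, hg⟩ d.edge := fun d => rfl
  rw [Finset.sum_congr rfl (fun d _ => h1 d), Finset.sum_comp (Sym2.lift ⟨g, hg⟩)
      (SimpleGraph.Dart.edge), image_dart_edge, Finset.mul_sum]
  refine Finset.sum_congr rfl fun e he => ?_
  rw [G.dart_edge_fiber_card e (SimpleGraph.mem_edgeFinset.mp he)]
  simp [two_smul, two_mul]

lemma dart_fst_sum (f : V → ℝ) :
    ∑ d : G.Dart, f d.fst = ∑ v, (G.degree v : ℝ) * f v := by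
  classical
  rw [← Finset.sum_fiberwise_of_maps_to' (g := fun d : G.Dart => d.fst)
      (t := (Finset.univ : Finset V)) (fun d _ => Finset.mem_univ _) f]
  refine Finset.sum_congr rfl fun v _ => ?_
  rw [Finset.sum_const, ← G.dart_fst_fiber_card_eq_degree v]
  simp [nsmul_eq_mul]

lemma dart_snd_sum (f : V → ℝ) :
    ∑ d : G.Dart, f d.snd = ∑ v, (G.degree v : ℝ) * f v := by
  classical
  rw [← dart_fst_sum]
  exact Fintype.sum_equiv (Function.Involutive.toPerm _ SimpleGraph.Dart.symm_involutive)
    _ _ (fun d => rfl)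

end Aux

lemma min_eq_avg_sub_abs (x y : ℝ) : min x y = (x + y) / 2 - |x - y| / 2 := by
  rcases le_total x y with h | h
  · rw [min_eq_left h, abs_of_nonpos (by linarith)]; ring
  · rw [min_eq_right h, abs_of_nonneg (by linarith)]; ring

lemma one_div_max_eq (a b : ℕ) (ha : 0 < a) (hb : 0 < b) :
    (1 : ℝ) / ((max a b : ℕ) : ℝ) = min (1 / (a : ℝ)) (1 / (b : ℝ)) := by
  have ha' : (0 : ℝ) < (a : ℝ) := by exact_mod_cast ha
  have hb' : (0 : ℝ) < (b : ℝ) := by exact_mod_cast hb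
  rcases le_total a b with h | h
  · rw [max_eq_right h,
      min_eq_right (one_div_le_one_div_of_le ha' (by exact_mod_cast h))]
  · rw [max_eq_left h,
      min_eq_left (one_div_le_one_div_of_le hb' (by exact_mod_cast h))]

lemma telescope (a b : ℕ) (ha : 1 ≤ a) (hab : a ≤ b) :
    ∑ j ∈ Finset.Ioc a b, ((1 : ℝ) / ((j : ℝ) - 1) - 1 / (j : ℝ))
      = 1 / (a : ℝ) - 1 / (b : ℝ) := by
  induction b, hab using Nat.le_induction with
  | base => simp
  | succ b hab ih =>
    rw [Finset.sum_Ioc_succ_top hab, ih]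
    have hb : (1 : ℝ) ≤ (b : ℝ) := by exact_mod_cast ha.trans hab
    push_cast
    ring

theorem stmt_15 {n k m : ℕ} (hnk : n ≤ 2 * k) (hkm : k ≤ m) (hmn : m + 2 ≤ n)
    {V : Type*} [Fintype V] (G : SimpleGraph V)
    (hcard : Fintype.card V = n) (hconn : G.Connected)
    (hmin : ∀ v : V, k ≤ G.degree v) (hmax : ∀ v : V, G.degree v ≤ m) :
    (n : ℝ) / 2 - (n : ℝ) ^ 2 / 8 * (1 / k - 1 / m) ≤ Rvar G := by
  classical
  have hk1 : 1 ≤ k := by omega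
  have hdpos : ∀ v : V, 0 < G.degree v := fun v => lt_of_lt_of_le hk1 (hmin v)
  set f : V → ℝ := fun v => 1 / (G.degree v : ℝ) with hf
  -- Step 1 : Rvar G = n/2 - A/4
  have key := dart_sum G (fun u v => (1 : ℝ) / (max (G.degree u) (G.degree v) : ℕ))
    (fun u v => by rw [max_comm])
  have hdart : ∑ d : G.Dart, (1 : ℝ) / ((max (G.degree d.fst) (G.degree d.snd) : ℕ) : ℝ)
      = 2 * Rvar G := key
  have hmin_eq : ∀ d : G.Dart,
      (1 : ℝ) / ((max (G.degree d.fst) (G.degree d.snd) : ℕ) : ℝ)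
        = (f d.fst + f d.snd) / 2 - |f d.fst - f d.snd| / 2 := by
    intro d
    rw [one_div_max_eq _ _ (hdpos _) (hdpos _), min_eq_avg_sub_abs]
  have hsum1 : ∑ d : G.Dart, (f d.fst + f d.snd) = 2 * (n : ℝ) := by
    rw [Finset.sum_add_distrib, dart_fst_sum, dart_snd_sum]
    have : ∀ v : V, (G.degree v : ℝ) * f v = 1 := by
      intro v
      have := hdpos v
      have h' : (G.degree v : ℝ) ≠ 0 := by exact_mod_cast this.ne'
      simp only [hf]
      field_simp
    simp only [this, Finset.sum_const, Finset.card_univ, hcard, nsmul_eq_mul, mul_one]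
    ring
  set A : ℝ := ∑ d : G.Dart, |f d.fst - f d.snd| with hA
  have hRvar : Rvar G = (n : ℝ) / 2 - A / 4 := by
    have : ∑ d : G.Dart, ((f d.fst + f d.snd) / 2 - |f d.fst - f d.snd| / 2)
        = (n : ℝ) - A / 2 := by
      rw [Finset.sum_sub_distrib, ← Finset.sum_div, ← Finset.sum_div, hsum1, ← hA]
      ring
    rw [Finset.sum_congr rfl (fun d _ => hmin_eq d), this] at hdart
    linarith
  -- Step 2 : A ≤ n^2/2 * (1/k - 1/m)
  have hAbound : A ≤ (n : ℝ) ^ 2 / 2 * (1 / (k : ℝ) - 1 / (m : ℝ)) := by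
    have hdecomp : ∀ d : G.Dart, |f d.fst - f d.snd| =
        ∑ j ∈ Finset.Ioc k m, (if min (G.degree d.fst) (G.degree d.snd) < j ∧
            j ≤ max (G.degree d.fst) (G.degree d.snd)
          then (1 : ℝ) / ((j : ℝ) - 1) - 1 / (j : ℝ) else 0) := by
      intro d
      set a := min (G.degree d.fst) (G.degree d.snd) with hadef
      set b := max (G.degree d.fst) (G.degree d.snd) with hbdef
      have hka : k ≤ a := le_min (hmin _) (hmin _)
      have hbm : b ≤ m := max_le (hmax _) (hmax _)
      have hab : a ≤ b := min_le_max
      have h1 : |f d.fst - f d.snd| = 1 / (a : ℝ) - 1 / (b : ℝ) := by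
        have h2 := hdpos d.fst
        have h3 := hdpos d.snd
        simp only [hf]
        rcases le_total (G.degree d.fst) (G.degree d.snd) with h | h
        · rw [hadef, hbdef, min_eq_left h, max_eq_right h, abs_of_nonneg]
          exact sub_nonneg.mpr (one_div_le_one_div_of_le
            (show (0 : ℝ) < (G.degree d.fst : ℝ) by exact_mod_cast h2)
            (show (G.degree d.fst : ℝ) ≤ (G.degree d.snd : ℝ) by exact_mod_cast h))
        · rw [hadef, hbdef, min_eq_right h, max_eq_left h, abs_of_nonpos, neg_sub]
          exact sub_nonpos.mpr (one_div_le_one_div_of_le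
            (show (0 : ℝ) < (G.degree d.snd : ℝ) by exact_mod_cast h3)
            (show (G.degree d.snd : ℝ) ≤ (G.degree d.fst : ℝ) by exact_mod_cast h))
      have hfilter : (Finset.Ioc k m).filter (fun j => a < j ∧ j ≤ b) = Finset.Ioc a b := by
        ext j
        simp only [Finset.mem_filter, Finset.mem_Ioc]
        omega
      rw [h1, ← telescope a b (hk1.trans hka) hab, ← hfilter, Finset.sum_filter]
    rw [hA, Finset.sum_congr rfl (fun d _ => hdecomp d), Finset.sum_comm]
    have hterm : ∀ j ∈ Finset.Ioc k m,
        ∑ d : G.Dart, (if min (G.degree d.fst) (G.degree d.snd) < j ∧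
            j ≤ max (G.degree d.fst) (G.degree d.snd)
          then (1 : ℝ) / ((j : ℝ) - 1) - 1 / (j : ℝ) else 0)
        ≤ ((1 : ℝ) / ((j : ℝ) - 1) - 1 / (j : ℝ)) * ((n : ℝ) ^ 2 / 2) := by
      intro j hj
      rw [Finset.mem_Ioc] at hj
      have hj2 : 2 ≤ j := by omega
      have hj2' : (2 : ℝ) ≤ (j : ℝ) := by exact_mod_cast hj2
      have hcpos : (0 : ℝ) ≤ (1 : ℝ) / ((j : ℝ) - 1) - 1 / (j : ℝ) := by
        rw [sub_nonneg]
        apply one_div_le_one_div_of_le <;> linarith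
      rw [← Finset.sum_filter, Finset.sum_const]
      set S := Finset.univ.filter (fun v : V => j ≤ G.degree v) with hS
      have hcut : #(Finset.univ.filter (fun d : G.Dart =>
            min (G.degree d.fst) (G.degree d.snd) < j ∧
            j ≤ max (G.degree d.fst) (G.degree d.snd)))
          ≤ 2 * #S * #Sᶜ := by
        have hmaps : ∀ d ∈ Finset.univ.filter (fun d : G.Dart =>
              min (G.degree d.fst) (G.degree d.snd) < j ∧
              j ≤ max (G.degree d.fst) (G.degree d.snd)),
            d.toProd ∈ (S ×ˢ Sᶜ) ∪ (Sᶜ ×ˢ S) := by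
          intro d hd
          simp only [Finset.mem_filter, Finset.mem_univ, true_and] at hd
          simp only [Finset.mem_union, Finset.mem_product, Finset.mem_compl, hS,
            Finset.mem_filter, Finset.mem_univ, true_and]
          omega
        calc #(Finset.univ.filter (fun d : G.Dart =>
              min (G.degree d.fst) (G.degree d.snd) < j ∧
              j ≤ max (G.degree d.fst) (G.degree d.snd)))
            ≤ #((S ×ˢ Sᶜ) ∪ (Sᶜ ×ˢ S)) := Finset.card_le_card_of_injOn
              SimpleGraph.Dart.toProd hmaps
              (fun d₁ _ d₂ _ h => SimpleGraph.Dart.toProd_injective h)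
          _ ≤ #(S ×ˢ Sᶜ) + #(Sᶜ ×ˢ S) := Finset.card_union_le _ _
          _ = 2 * #S * #Sᶜ := by rw [Finset.card_product, Finset.card_product]; ring
      have hScard : #S + #Sᶜ = n := by rw [Finset.card_add_card_compl, hcard]
      have hcutR : (#(Finset.univ.filter (fun d : G.Dart =>
            min (G.degree d.fst) (G.degree d.snd) < j ∧
            j ≤ max (G.degree d.fst) (G.degree d.snd))) : ℝ) ≤ (n : ℝ) ^ 2 / 2 := by
        have h1 : (#(Finset.univ.filter (fun d : G.Dart =>
            min (G.degree d.fst) (G.degree d.snd) < j ∧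
            j ≤ max (G.degree d.fst) (G.degree d.snd))) : ℝ)
            ≤ 2 * (#S : ℝ) * (#Sᶜ : ℝ) := by exact_mod_cast hcut
        have h2 : (#S : ℝ) + (#Sᶜ : ℝ) = (n : ℝ) := by exact_mod_cast hScard
        nlinarith [sq_nonneg ((#S : ℝ) - (#Sᶜ : ℝ))]
      rw [nsmul_eq_mul]
      nlinarith
    calc ∑ j ∈ Finset.Ioc k m, ∑ d : G.Dart,
          (if min (G.degree d.fst) (G.degree d.snd) < j ∧
              j ≤ max (G.degree d.fst) (G.degree d.snd)
            then (1 : ℝ) / ((j : ℝ) - 1) - 1 / (j : ℝ) else 0)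
        ≤ ∑ j ∈ Finset.Ioc k m, ((1 : ℝ) / ((j : ℝ) - 1) - 1 / (j : ℝ)) * ((n : ℝ) ^ 2 / 2) :=
          Finset.sum_le_sum hterm
      _ = (∑ j ∈ Finset.Ioc k m, ((1 : ℝ) / ((j : ℝ) - 1) - 1 / (j : ℝ))) * ((n : ℝ) ^ 2 / 2) := by
          rw [← Finset.sum_mul]
      _ = (1 / (k : ℝ) - 1 / (m : ℝ)) * ((n : ℝ) ^ 2 / 2) := by rw [telescope k m hk1 hkm]
      _ = (n : ℝ) ^ 2 / 2 * (1 / (k : ℝ) - 1 / (m : ℝ)) := by ring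
  rw [hRvar]
  linarith
end
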